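/- Let p ≥ 2 and let G be obtained by embedding a disjoint union of paths P_3 covering p-1 vertices (with p ≡ 1 mod 3, so (p-1)/3 paths) into the part of size p-1 of the complete bipartite graph K_{p-1,p+1}. Then G has an equitable partition with quotient matrix B = [[0,2,p+1],[1,0,p+1],[(p-1)/3, 2(p-1)/3, 0]], and λ(G) equals the largest eigenvalue of B. -/

import Mathlib

open SimpleGraph
open scoped Classical

/-- The graph obtained by embedding a disjoint union of paths `P₃` covering the `p - 1`
vertices of the small part of the complete bipartite graph `K_{p-1,p+1}` (the blocks of three
consecutive vertices `3b, 3b+1, 3b+2` of `Fin (p-1)` carry the paths, with `3b+1` the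
center). -/
def pathPackBip (p : ℕ) : SimpleGraph (Fin (p - 1) ⊕ Fin (p + 1)) where
  Adj x y := match x, y with
    | Sum.inl i, Sum.inl j =>
        (i : ℕ) / 3 = (j : ℕ) / 3 ∧ ((i : ℕ) = (j : ℕ) + 1 ∨ (j : ℕ) = (i : ℕ) + 1)
    | Sum.inr _, Sum.inr _ => False
    | Sum.inl _, Sum.inr _ => True
    | Sum.inr _, Sum.inl _ => True
  symm := by
    constructor
    rintro (i | i) (j | j) h
    · exact ⟨h.1.symm, h.2.symm⟩
    · trivial
    · trivial
    · exact h
  loopless := by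
    constructor
    rintro (i | i) h
    · have := h.2; omega
    · exact h
  
/-- The three cells of the equitable partition: cell `0` consists of the centers of the
embedded `P₃`'s, cell `1` of their endpoints, and cell `2` of the part of size `p + 1`. -/
def cell16 (p : ℕ) : Fin (p - 1) ⊕ Fin (p + 1) → Fin 3 :=
  fun x => match x with
    | Sum.inl i => if (i : ℕ) % 3 = 1 then 0 else 1
    | Sum.inr _ => 2

lemma matrix_mem_spectrum_iff16 {n : Type*} [Fintype n] [DecidableEq n] (M : Matrix n n ℝ)
    (μ : ℝ) : μ ∈ spectrum ℝ M ↔ ∃ v : n → ℝ, v ≠ 0 ∧ M.mulVec v = μ • v := by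
  rw [← AlgEquiv.spectrum_eq (Matrix.toLinAlgEquiv' : Matrix n n ℝ ≃ₐ[ℝ] _) M,
    ← Module.End.hasEigenvalue_iff_mem_spectrum]
  constructor
  · intro h
    obtain ⟨v, hv⟩ := h.exists_hasEigenvector
    refine ⟨v, hv.2, ?_⟩
    simpa [Matrix.toLinAlgEquiv'_apply] using hv.apply_eq_smul
  · rintro ⟨v, hv0, hv⟩
    refine Module.End.hasEigenvalue_of_hasEigenvector
      ⟨Module.End.mem_eigenspace_iff.2 ?_, hv0⟩
    simpa [Matrix.toLinAlgEquiv'_apply] using hv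

lemma card_zero16 {α : Type*} {P : α → Prop} (h : ∀ y, ¬ P y) :
    (Nat.card {y // P y} : ℝ) = 0 := by
  have : IsEmpty {y // P y} := ⟨fun y => h y y.2⟩
  simp

lemma card_one16 {α : Type*} {P : α → Prop} (h : ∃! y, P y) :
    (Nat.card {y // P y} : ℝ) = 1 := by
  obtain ⟨y, hy, hu⟩ := h
  have : Nat.card {y // P y} = 1 := by
    rw [Nat.card_eq_one_iff_unique]
    exact ⟨⟨fun a b => Subtype.ext ((hu a a.2).trans (hu b b.2).symm)⟩, ⟨⟨y, hy⟩⟩⟩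
  rw [this]; norm_num

lemma card_two16 {α : Type*} {P : α → Prop} (a b : α) (hne : a ≠ b)
    (ha : P a) (hb : P b) (h : ∀ y, P y → y = a ∨ y = b) :
    (Nat.card {y // P y} : ℝ) = 2 := by
  have : Nat.card {y // P y} = 2 := by
    rw [Nat.card_eq_two_iff]
    refine ⟨⟨a, ha⟩, ⟨b, hb⟩, by simpa using hne, ?_⟩
    rw [Set.eq_univ_iff_forall]
    rintro ⟨y, hy⟩
    rcases h y hy with rfl | rfl
    · exact Set.mem_insert _ _
    · exact Set.mem_insert_of_mem _ rfl
  rw [this]; norm_num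

lemma card_model16 {α : Type*} {P : α → Prop} (m : ℕ) (f : Fin m → {y // P y})
    (hf : Function.Bijective f) : (Nat.card {y // P y} : ℝ) = m := by
  rw [← Nat.card_eq_of_bijective f hf, Nat.card_eq_fintype_card, Fintype.card_fin]

lemma cubic_root16 (Q C : ℝ) (hQ : 0 < Q) (hC : 0 < C) :
    ∃ μ : ℝ, 0 < μ ∧ 2 < μ^2 ∧ μ^3 = (2 + 3*Q*C)*μ + 4*Q*C := by
  set f : ℝ → ℝ := fun t => t^3 - (2 + 3*Q*C)*t - 4*Q*C with hf
  have hcont : ContinuousOn f (Set.Icc (Real.sqrt 2) (2 + 7*Q*C)) := by fun_prop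
  have h2 : Real.sqrt 2 ≤ 2 + 7*Q*C := by
    nlinarith [Real.sq_sqrt (by norm_num : (2:ℝ) ≥ 0), Real.sqrt_nonneg 2, mul_pos hQ hC]
  have hs2 : (Real.sqrt 2)^2 = 2 := Real.sq_sqrt (by norm_num)
  have hfa : f (Real.sqrt 2) < 0 := by
    simp only [hf]
    nlinarith [Real.sqrt_nonneg 2, mul_pos hQ hC, hs2]
  have hfb : 0 < f (2 + 7*Q*C) := by
    simp only [hf]
    nlinarith [mul_pos hQ hC, sq_nonneg (Q*C)]
  have h0 : (0:ℝ) ∈ Set.Icc (f (Real.sqrt 2)) (f (2 + 7*Q*C)) := ⟨le_of_lt hfa, le_of_lt hfb⟩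
  obtain ⟨μ, hμmem, hμ⟩ := intermediate_value_Icc h2 hcont h0
  have hne : μ ≠ Real.sqrt 2 := by
    rintro rfl; rw [hμ] at hfa; exact lt_irrefl 0 hfa
  have hgt : Real.sqrt 2 < μ := lt_of_le_of_ne hμmem.1 (Ne.symm hne)
  have hμpos : 0 < μ := lt_of_le_of_lt (Real.sqrt_nonneg 2) hgt
  refine ⟨μ, hμpos, ?_, by simp only [hf] at hμ; linarith⟩
  nlinarith [Real.sqrt_nonneg 2, hs2]

lemma eig_B16 (Q C μ : ℝ) (hQ : 0 < Q) (hμ : 0 < μ) (h2 : 2 < μ^2)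
    (hroot : μ^3 = (2 + 3*Q*C)*μ + 4*Q*C) :
    ∃ v : Fin 3 → ℝ, (∀ j, 0 < v j) ∧
      (!![0, 2, Q; 1, 0, Q; C, 2*C, 0]).mulVec v = μ • v := by
  have hd : μ^2 - 2 ≠ 0 := by nlinarith
  refine ⟨![Q*(μ+2)/(μ^2-2), Q*(μ+1)/(μ^2-2), 1], ?_, ?_⟩
  · intro j
    fin_cases j <;> simp <;>
      exact div_pos (by nlinarith) (by nlinarith)
  · funext j
    fin_cases j <;>
      simp [Matrix.mulVec, dotProduct, Fin.sum_univ_three] <;>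
      field_simp <;> ring_nf <;> nlinarith [hroot]

lemma count16 (p : ℕ) (hp : 2 ≤ p) (hp3 : p % 3 = 1)
    (x : Fin (p - 1) ⊕ Fin (p + 1)) (j : Fin 3) :
    (Nat.card {y // (pathPackBip p).Adj x y ∧ cell16 p y = j} : ℝ) =
      !![0, 2, (p : ℝ) + 1; 1, 0, (p : ℝ) + 1;
         ((p : ℝ) - 1) / 3, 2 * ((p : ℝ) - 1) / 3, 0] (cell16 p x) j := by
  have hp4 : 4 ≤ p := by omega
  set c := (p - 1) / 3 with hcdef
  have hc : p - 1 = 3 * c := by omega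
  have hpR : (p : ℝ) = 3 * (c:ℝ) + 1 := by
    have : p = 3 * c + 1 := by omega
    exact_mod_cast congrArg (Nat.cast : ℕ → ℝ) this
  -- card p+1 helper for j = 2 and x = inl i
  have hbig : ∀ i : Fin (p-1),
      (Nat.card {y // (pathPackBip p).Adj (Sum.inl i) y ∧ cell16 p y = (2:Fin 3)} : ℝ)
        = (p : ℝ) + 1 := by
    intro i
    have := card_model16 (P := fun y => (pathPackBip p).Adj (Sum.inl i) y ∧ cell16 p y = (2:Fin 3))
      (p+1) (fun a => ⟨Sum.inr a, trivial, rfl⟩) ?_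
    · rw [this]; push_cast; ring
    constructor
    · intro a b hab
      simpa [Sum.inr.injEq] using congrArg Subtype.val hab
    · rintro ⟨(k | a), ⟨hadj, hcell⟩⟩
      · exfalso
        rcases Nat.decEq ((k:ℕ) % 3) 1 with hk | hk
        · simp [cell16, hk] at hcell
        · simp [cell16, hk] at hcell
      · exact ⟨a, rfl⟩
  obtain (i | a) := x
  · have hilt := i.isLt
    rcases (by omega : (i:ℕ) % 3 = 1 ∨ (i:ℕ) % 3 = 0 ∨ (i:ℕ) % 3 = 2) with h1 | h0 | h2
    · -- center, cell 0
      have hcell : cell16 p (Sum.inl i) = 0 := by simp [cell16, h1]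
      rw [hcell]
      fin_cases j
      · rw [show ((⟨0, by norm_num⟩ : Fin 3)) = 0 from rfl]
        refine (card_zero16 ?_).trans (by norm_num)
        rintro (k | a) ⟨hadj, hcell⟩
        · obtain ⟨hdiv, hpm⟩ := hadj
          have hk : (k:ℕ) % 3 = 1 := by
            by_contra hk
            simp [cell16, hk] at hcell
          omega
        · simp [cell16] at hcell
      · rw [show ((⟨1, by norm_num⟩ : Fin 3)) = 1 from rfl]
        have hi1 : (i:ℕ) + 1 < p - 1 := by omega
        have hi0 : (i:ℕ) - 1 < p - 1 := by omega
        refine (card_two16 (Sum.inl ⟨(i:ℕ) - 1, hi0⟩) (Sum.inl ⟨(i:ℕ) + 1, hi1⟩)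
          ?_ ?_ ?_ ?_).trans (by norm_num)
        · simp only [ne_eq, Sum.inl.injEq, Fin.mk.injEq]
          omega
        · exact ⟨⟨by simp only [Fin.val_mk]; omega, by simp only [Fin.val_mk]; omega⟩, by
            have : ((i:ℕ) - 1) % 3 ≠ 1 := by omega
            simp [cell16, this]⟩
        · exact ⟨⟨by simp only [Fin.val_mk]; omega, Or.inr rfl⟩, by
            have : ((i:ℕ) + 1) % 3 ≠ 1 := by omega
            simp [cell16, this]⟩
        · rintro (k | a) ⟨hadj, hcell⟩
          · obtain ⟨hdiv, hpm⟩ := hadj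
            have hk : (k:ℕ) ≠ (i:ℕ) := by rintro h; omega
            rcases hpm with h | h
            · left; congr 1; exact Fin.ext (by simp only [Fin.val_mk]; omega)
            · right; congr 1; exact Fin.ext (by simp only [Fin.val_mk]; omega)
          · simp [cell16] at hcell
      · rw [show ((⟨2, by norm_num⟩ : Fin 3)) = 2 from rfl]
        refine (hbig i).trans ?_
        rfl
    · -- left endpoint, cell 1, i % 3 = 0
      have hne1 : (i:ℕ) % 3 ≠ 1 := by omega
      have hcell : cell16 p (Sum.inl i) = 1 := by simp [cell16, hne1]
      rw [hcell]
      have hi1 : (i:ℕ) + 1 < p - 1 := by omega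
      fin_cases j
      · rw [show ((⟨0, by norm_num⟩ : Fin 3)) = 0 from rfl]
        refine (card_one16 ⟨Sum.inl ⟨(i:ℕ) + 1, hi1⟩, ⟨⟨by simp only [Fin.val_mk]; omega,
          Or.inr rfl⟩, by
            have : ((i:ℕ) + 1) % 3 = 1 := by omega
            simp [cell16, Fin.val_mk, this]⟩, ?_⟩).trans (by norm_num)
        rintro (k | a) ⟨⟨hdiv, hpm⟩, hcellk⟩
        · have hk : (k:ℕ) % 3 = 1 := by
            by_contra hk
            simp [cell16, hk] at hcellk
          congr 1
          exact Fin.ext (by simp only [Fin.val_mk]; omega)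
        · simp [cell16] at hcellk
      · rw [show ((⟨1, by norm_num⟩ : Fin 3)) = 1 from rfl]
        refine (card_zero16 ?_).trans (by norm_num)
        rintro (k | a) ⟨⟨hdiv, hpm⟩, hcellk⟩
        · rcases Nat.decEq ((k:ℕ) % 3) 1 with hk | hk
          · omega
          · simp [cell16, hk] at hcellk
        · simp [cell16] at hcellk
      · rw [show ((⟨2, by norm_num⟩ : Fin 3)) = 2 from rfl]
        exact (hbig i).trans (by rfl)
    · -- right endpoint, cell 1, i % 3 = 2
      have hne1 : (i:ℕ) % 3 ≠ 1 := by omega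
      have hcell : cell16 p (Sum.inl i) = 1 := by simp [cell16, hne1]
      rw [hcell]
      have hi0 : (i:ℕ) - 1 < p - 1 := by omega
      fin_cases j
      · rw [show ((⟨0, by norm_num⟩ : Fin 3)) = 0 from rfl]
        refine (card_one16 ⟨Sum.inl ⟨(i:ℕ) - 1, hi0⟩, ⟨⟨by simp only [Fin.val_mk]; omega,
          by simp only [Fin.val_mk]; omega⟩, by
            have : ((i:ℕ) - 1) % 3 = 1 := by omega
            simp [cell16, Fin.val_mk, this]⟩, ?_⟩).trans (by norm_num)
        rintro (k | a) ⟨⟨hdiv, hpm⟩, hcellk⟩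
        · have hk : (k:ℕ) % 3 = 1 := by
            by_contra hk
            simp [cell16, hk] at hcellk
          congr 1
          exact Fin.ext (by simp only [Fin.val_mk]; omega)
        · simp [cell16] at hcellk
      · rw [show ((⟨1, by norm_num⟩ : Fin 3)) = 1 from rfl]
        refine (card_zero16 ?_).trans (by norm_num)
        rintro (k | a) ⟨⟨hdiv, hpm⟩, hcellk⟩
        · rcases Nat.decEq ((k:ℕ) % 3) 1 with hk | hk
          · omega
          · simp [cell16, hk] at hcellk
        · simp [cell16] at hcellk
      · rw [show ((⟨2, by norm_num⟩ : Fin 3)) = 2 from rfl]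
        exact (hbig i).trans (by rfl)
  · -- large part, cell 2
    have hcell : cell16 p (Sum.inr a) = 2 := rfl
    rw [hcell]
    fin_cases j
    · rw [show ((⟨0, by norm_num⟩ : Fin 3)) = 0 from rfl]
      have key := card_model16
        (P := fun y => (pathPackBip p).Adj (Sum.inr a) y ∧ cell16 p y = (0:Fin 3)) c
        (fun b => ⟨Sum.inl ⟨3 * (b:ℕ) + 1, by omega⟩, trivial, by
          have : (3 * (b:ℕ) + 1) % 3 = 1 := by omega
          simp [cell16, Fin.val_mk, this]⟩) ?_
      · rw [key]
        show (c:ℝ) = ((p:ℝ) - 1) / 3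
        rw [hpR]; ring
      constructor
      · intro b1 b2 h
        have := congrArg Subtype.val h
        simp only [Sum.inl.injEq, Fin.mk.injEq] at this
        exact Fin.ext (by omega)
      · rintro ⟨(k | b), ⟨hadj, hcellk⟩⟩
        · have hk : (k:ℕ) % 3 = 1 := by
            by_contra hk
            simp [cell16, hk] at hcellk
          have hklt := k.isLt
          refine ⟨⟨(k:ℕ) / 3, by omega⟩, ?_⟩
          apply Subtype.ext
          show Sum.inl _ = Sum.inl _
          congr 1
          exact Fin.ext (by simp only [Fin.val_mk]; omega)
        · exact hadj.elim
    · rw [show ((⟨1, by norm_num⟩ : Fin 3)) = 1 from rfl]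
      have key := card_model16
        (P := fun y => (pathPackBip p).Adj (Sum.inr a) y ∧ cell16 p y = (1:Fin 3)) (2 * c)
        (fun m => ⟨Sum.inl ⟨3 * ((m:ℕ) / 2) + 2 * ((m:ℕ) % 2), by
            have := m.isLt; omega⟩, trivial, by
          have : (3 * ((m:ℕ) / 2) + 2 * ((m:ℕ) % 2)) % 3 ≠ 1 := by omega
          simp [cell16, Fin.val_mk, this]; omega⟩) ?_
      · rw [key]
        show ((2 * c : ℕ) : ℝ) = 2 * ((p:ℝ) - 1) / 3
        push_cast
        rw [hpR]; ring
      constructor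
      · intro m1 m2 h
        have := congrArg Subtype.val h
        simp only [Sum.inl.injEq, Fin.mk.injEq] at this
        exact Fin.ext (by omega)
      · rintro ⟨(k | b), ⟨hadj, hcellk⟩⟩
        · have hk : (k:ℕ) % 3 ≠ 1 := by
            intro hk
            simp [cell16, hk] at hcellk
          have hklt := k.isLt
          refine ⟨⟨2 * ((k:ℕ) / 3) + ((k:ℕ) % 3) / 2, by omega⟩, ?_⟩
          apply Subtype.ext
          show Sum.inl _ = Sum.inl _
          congr 1
          exact Fin.ext (by simp only [Fin.val_mk]; omega)
        · exact hadj.elim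
    · rw [show ((⟨2, by norm_num⟩ : Fin 3)) = 2 from rfl]
      refine (card_zero16 ?_).trans (by rfl)
      rintro (k | b) ⟨hadj, hcellk⟩
      · rcases Nat.decEq ((k:ℕ) % 3) 1 with hk | hk
        · simp [cell16, hk] at hcellk
        · simp [cell16, hk] at hcellk
      · exact hadj.elim

lemma lift16 (p : ℕ) (hp : 2 ≤ p) (hp3 : p % 3 = 1) (v : Fin 3 → ℝ) (ν : ℝ)
    (hv : (!![0, 2, (p : ℝ) + 1; 1, 0, (p : ℝ) + 1;
         ((p : ℝ) - 1) / 3, 2 * ((p : ℝ) - 1) / 3, 0]).mulVec v = ν • v) :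
    ((pathPackBip p).adjMatrix ℝ).mulVec (fun x => v (cell16 p x)) =
      ν • fun x => v (cell16 p x) := by
  set B := !![0, 2, (p : ℝ) + 1; 1, 0, (p : ℝ) + 1;
         ((p : ℝ) - 1) / 3, 2 * ((p : ℝ) - 1) / 3, 0] with hB
  funext x
  show ∑ y, (pathPackBip p).adjMatrix ℝ x y * v (cell16 p y) = _
  have step1 : ∀ j : Fin 3,
      ∑ y ∈ Finset.univ.filter (fun y => cell16 p y = j),
        (pathPackBip p).adjMatrix ℝ x y * v (cell16 p y) = B (cell16 p x) j * v j := by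
    intro j
    have e1 : ∑ y ∈ Finset.univ.filter (fun y => cell16 p y = j),
        (pathPackBip p).adjMatrix ℝ x y * v (cell16 p y)
        = (∑ y ∈ Finset.univ.filter (fun y => cell16 p y = j),
            (pathPackBip p).adjMatrix ℝ x y) * v j := by
      rw [Finset.sum_mul]
      refine Finset.sum_congr rfl fun y hy => ?_
      rw [(Finset.mem_filter.mp hy).2]
    rw [e1]
    congr 1
    have e2 : ∑ y ∈ Finset.univ.filter (fun y => cell16 p y = j),
        (pathPackBip p).adjMatrix ℝ x y
        = ((Finset.univ.filter (fun y => (pathPackBip p).Adj x y ∧ cell16 p y = j)).card : ℝ) := by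
      simp only [SimpleGraph.adjMatrix_apply]
      rw [Finset.sum_boole, Finset.filter_filter]
      congr 2
      ext y
      simp only [Finset.mem_filter]
      tauto
    rw [e2, hB, ← count16 p hp hp3 x j]
    congr 1
    rw [Nat.card_eq_fintype_card, Fintype.card_subtype]
  calc ∑ y, (pathPackBip p).adjMatrix ℝ x y * v (cell16 p y)
      = ∑ j : Fin 3, ∑ y ∈ Finset.univ.filter (fun y => cell16 p y = j),
          (pathPackBip p).adjMatrix ℝ x y * v (cell16 p y) :=
        (Finset.sum_fiberwise _ _ _).symm
    _ = ∑ j : Fin 3, B (cell16 p x) j * v j := by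
        exact Finset.sum_congr rfl fun j _ => step1 j
    _ = (B.mulVec v) (cell16 p x) := rfl
    _ = ν * v (cell16 p x) := by rw [hv]; rfl

/-- Let `p ≥ 2` with `p ≡ 1 (mod 3)`, and let `G` be obtained by embedding
`(p-1)/3` disjoint paths `P₃` covering the part of size `p - 1` of the complete bipartite
graph `K_{p-1,p+1}`.  Then `G` has an equitable partition (centers, endpoints, large part)
with quotient matrix `B = [[0,2,p+1],[1,0,p+1],[(p-1)/3, 2(p-1)/3, 0]]`, and the spectral
radius `λ(G)` equals the largest eigenvalue of `B`. -/
theorem stmt16 (p : ℕ) (hp : 2 ≤ p) (hp3 : p % 3 = 1) :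
    (∀ x : Fin (p - 1) ⊕ Fin (p + 1), ∀ j : Fin 3,
      (Nat.card {y // (pathPackBip p).Adj x y ∧ cell16 p y = j} : ℝ) =
        !![0, 2, (p : ℝ) + 1; 1, 0, (p : ℝ) + 1;
           ((p : ℝ) - 1) / 3, 2 * ((p : ℝ) - 1) / 3, 0] (cell16 p x) j) ∧
    sSup (spectrum ℝ ((pathPackBip p).adjMatrix ℝ)) =
      sSup (spectrum ℝ (!![0, 2, (p : ℝ) + 1; 1, 0, (p : ℝ) + 1;
           ((p : ℝ) - 1) / 3, 2 * ((p : ℝ) - 1) / 3, 0])) := by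

  have hp4 : 4 ≤ p := by omega
  refine ⟨fun x j => count16 p hp hp3 x j, ?_⟩
  set A := (pathPackBip p).adjMatrix ℝ with hA
  set B := !![0, 2, (p : ℝ) + 1; 1, 0, (p : ℝ) + 1;
      ((p : ℝ) - 1) / 3, 2 * ((p : ℝ) - 1) / 3, 0] with hB
  have hQ : (0:ℝ) < (p:ℝ) + 1 := by positivity
  have hC : (0:ℝ) < ((p:ℝ) - 1) / 3 := by
    have : (4:ℝ) ≤ (p:ℝ) := by exact_mod_cast hp4
    linarith
  obtain ⟨μ, hμpos, hμ2, hroot⟩ := cubic_root16 ((p:ℝ) + 1) (((p:ℝ) - 1) / 3) hQ hC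
  obtain ⟨v, hvpos, hBv'⟩ := eig_B16 ((p:ℝ) + 1) (((p:ℝ) - 1) / 3) μ hQ hμpos hμ2 hroot
  have hBeq : B = !![0, 2, (p:ℝ) + 1; 1, 0, (p:ℝ) + 1;
      ((p:ℝ) - 1) / 3, 2 * (((p:ℝ) - 1) / 3), 0] := by
    rw [hB]
    congr 1
    ring
  have hBv : B.mulVec v = μ • v := by rw [hBeq]; exact hBv'
  -- the lifted positive eigenvector of A
  set w : Fin (p - 1) ⊕ Fin (p + 1) → ℝ := fun x => v (cell16 p x) with hwdef
  have hw : A.mulVec w = μ • w := lift16 p hp hp3 v μ (by rw [← hB]; exact hBv)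
  have hwpos : ∀ x, 0 < w x := fun x => hvpos _
  have hA0 : ∀ x y, 0 ≤ A x y := by
    intro x y
    rw [hA, SimpleGraph.adjMatrix_apply]
    split <;> norm_num
  have hsymm : ∀ x y, A x y = A y x := by
    intro x y
    rw [hA, SimpleGraph.adjMatrix_apply, SimpleGraph.adjMatrix_apply, SimpleGraph.adj_comm]
  -- every real eigenvalue of A is at most μ
  have claim : ∀ ν ∈ spectrum ℝ A, ν ≤ μ := by
    intro ν hν
    obtain ⟨u, hu0, hu⟩ := (matrix_mem_spectrum_iff16 _ _).1 hν
    set t := ∑ x, w x * |u x| with ht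
    have htpos : 0 < t := by
      obtain ⟨x0, hx0⟩ := Function.ne_iff.1 hu0
      refine Finset.sum_pos' (fun x _ => mul_nonneg (le_of_lt (hwpos x)) (abs_nonneg _))
        ⟨x0, Finset.mem_univ _, mul_pos (hwpos x0) (abs_pos.2 (by simpa using hx0))⟩
    have hstep : |ν| * t ≤ μ * t := by
      have h2 : ∀ x, |(A.mulVec u) x| ≤ ∑ y, A x y * |u y| := by
        intro x
        show |∑ y, A x y * u y| ≤ ∑ y, A x y * |u y|
        refine (Finset.abs_sum_le_sum_abs _ _).trans ?_
        refine Finset.sum_le_sum fun y _ => ?_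
        rw [abs_mul, abs_of_nonneg (hA0 x y)]
      calc |ν| * t = ∑ x, w x * |(A.mulVec u) x| := by
            rw [ht, Finset.mul_sum]
            refine Finset.sum_congr rfl fun x _ => ?_
            rw [hu]
            show |ν| * (w x * |u x|) = w x * |ν • u x|
            rw [smul_eq_mul, abs_mul]
            ring
        _ ≤ ∑ x, w x * (∑ y, A x y * |u y|) := by
            refine Finset.sum_le_sum fun x _ => ?_
            exact mul_le_mul_of_nonneg_left (h2 x) (le_of_lt (hwpos x))
        _ = ∑ x, ∑ y, w x * (A x y * |u y|) := by
            refine Finset.sum_congr rfl fun x _ => ?_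
            rw [Finset.mul_sum]
        _ = ∑ y, ∑ x, w x * (A x y * |u y|) := Finset.sum_comm
        _ = ∑ y, (A.mulVec w) y * |u y| := by
            refine Finset.sum_congr rfl fun y _ => ?_
            show _ = (∑ x, A y x * w x) * |u y|
            rw [Finset.sum_mul]
            refine Finset.sum_congr rfl fun x _ => ?_
            rw [hsymm x y]
            ring
        _ = ∑ y, μ * (w y * |u y|) := by
            refine Finset.sum_congr rfl fun y _ => ?_
            rw [hw]
            show μ • w y * |u y| = _
            rw [smul_eq_mul]
            ring
        _ = μ * t := by rw [ht, Finset.mul_sum]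
    have : |ν| ≤ μ := le_of_mul_le_mul_right hstep htpos
    exact (le_abs_self ν).trans this
  have hμB : μ ∈ spectrum ℝ B := by
    refine (matrix_mem_spectrum_iff16 _ _).2 ⟨v, ?_, hBv⟩
    intro hcon
    have := congrFun hcon 2
    simp at this
    exact (ne_of_gt (hvpos 2)) this
  have hsub : spectrum ℝ B ⊆ spectrum ℝ A := by
    intro ν hν
    obtain ⟨v', hv'0, hv'⟩ := (matrix_mem_spectrum_iff16 _ _).1 hν
    refine (matrix_mem_spectrum_iff16 _ _).2 ⟨fun x => v' (cell16 p x), ?_,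
      lift16 p hp hp3 v' ν (by rw [← hB]; exact hv')⟩
    obtain ⟨j, hj⟩ := Function.ne_iff.1 hv'0
    have hsurj : ∃ x : Fin (p - 1) ⊕ Fin (p + 1), cell16 p x = j := by
      fin_cases j
      · exact ⟨Sum.inl ⟨1, by omega⟩, by simp [cell16]⟩
      · exact ⟨Sum.inl ⟨0, by omega⟩, by simp [cell16]⟩
      · exact ⟨Sum.inr ⟨0, by omega⟩, rfl⟩
    obtain ⟨x, hx⟩ := hsurj
    intro hcon
    apply hj
    have := congrFun hcon x
    rw [hx] at this
    simpa using this
  have bddA : BddAbove (spectrum ℝ A) := ⟨μ, fun ν hν => claim ν hν⟩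
  have hμle : μ ≤ sSup (spectrum ℝ B) := le_csSup (bddA.mono hsub) hμB
  refine le_antisymm ?_ ?_
  · exact Real.sSup_le (fun ν hν => (claim ν hν).trans hμle) (le_trans hμpos.le hμle)
  · exact csSup_le_csSup bddA ⟨μ, hμB⟩ hsub
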